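/- arXiv:0803.0118 — 2 statements merged into one kernel-verified Lean document; each statement's English description precedes it below -/
import Mathlib

section
/- Let G be a finite 2-group with center C such that G/C is isomorphic to C₂ × C₂ and the commutator subgroup G' = ⟨e⟩ has order two. Then the map ⊙ : G → G defined by g⊙ = g if g ∈ C and g⊙ = ge if g ∉ C is an anti-automorphism of G of order two (i.e. (gh)⊙ = h⊙g⊙ for all g, h ∈ G, and ⊙ ∘ ⊙ is the identity). -/
/-- The group algebra of `G` over the field `ℤ₂` with two elements. -/
abbrev R2 (G : Type*) [Group G] := MonoidAlgebra (ZMod 2) G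

/-- The image of a group element in the group algebra. -/
noncomputable def emb {G : Type*} [Group G] (g : G) : R2 G := MonoidAlgebra.single g 1

/-- The augmentation map: the sum of the coefficients. -/
def aug {G : Type*} [Group G] (x : R2 G) : ZMod 2 := Finsupp.sum x.coeff fun _ c => c

/-- The canonical embedding of `G` into the unit group of its group algebra. -/
noncomputable def iota (G : Type*) [Group G] : G →* (R2 G)ˣ :=
  (Units.map (MonoidAlgebra.of (ZMod 2) G)).comp toUnits.toMonoidHom

open Classical in
/-- The map `g ↦ g` for `g ∈ C = Z(G)` and `g ↦ ge` for `g ∉ C`. -/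
noncomputable def sigmaMap (G : Type*) [Group G] (e : G) : G → G :=
  fun g => if g ∈ Subgroup.center G then g else g * e

/-- The involution `⊙` of `ℤ₂G`: the linear extension of `g ↦ g` for `g ∈ C = Z(G)`
and `g ↦ ge` for `g ∉ C`. -/
noncomputable def odot {G : Type*} [Group G] (e : G) (x : R2 G) : R2 G :=
  MonoidAlgebra.ofCoeff (Finsupp.mapDomain (sigmaMap G e) x.coeff)

/-- The set of unitary normalized units: `V_⊙(ℤ₂G) = {u ∈ V(ℤ₂G) : u⊙ = u⁻¹}`. -/
noncomputable def VodotSet (G : Type*) [Group G] (e : G) : Set (R2 G)ˣ :=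
  {u | aug (u : R2 G) = 1 ∧ odot e (u : R2 G) = ((u⁻¹ : (R2 G)ˣ) : R2 G)}

/-- Membership in the ideal `(1 + e)ℤ₂C` of `ℤ₂C`, where `C = Z(G)`. -/
noncomputable def InIdC {G : Type*} [Group G] (e : G) (x : R2 G) : Prop :=
  ∃ u : R2 G, ↑u.coeff.support ⊆ (Subgroup.center G : Set G) ∧ x = (1 + emb e) * u

/-- The set `W = {1 + y₁a + y₂b + y₃ab : yᵢ ∈ (1 + e)ℤ₂C}` inside the unit group. -/
noncomputable def WsetB {G : Type*} [Group G] (e a b : G) : Set (R2 G)ˣ :=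
  {w | ∃ y₁ y₂ y₃ : R2 G, InIdC e y₁ ∧ InIdC e y₂ ∧ InIdC e y₃ ∧
    (w : R2 G) = 1 + y₁ * emb a + y₂ * emb b + y₃ * (emb a * emb b)}

/-- The set `V(ℤ₂C)[2]` of normalized units of `ℤ₂C` of order dividing 2, where `C = Z(G)`. -/
noncomputable def V2Set (G : Type*) [Group G] : Set (R2 G)ˣ :=
  {u | ↑(u : R2 G).coeff.support ⊆ (Subgroup.center G : Set G) ∧ aug (u : R2 G) = 1 ∧ u * u = 1}

abbrev K4' := Multiplicative (ZMod 2) × Multiplicative (ZMod 2)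

lemma k4'_sq : ∀ x : K4', x * x = 1 := by decide

lemma k4'_cases : ∀ u v w : K4', u ≠ 1 ∧ v ≠ 1 ∧ u ≠ v →
    w = 1 ∨ w = u ∨ w = v ∨ w = u * v := by decide

lemma zp_mem {G : Type*} [Group G] (e x : G) (he2 : e * e = 1)
    (hx : x ∈ Subgroup.zpowers e) : x = 1 ∨ x = e := by
  obtain ⟨k, hk⟩ := hx
  have h2 : e ^ (2 : ℤ) = 1 := by rw [zpow_two]; exact he2
  rcases Int.even_or_odd k with ⟨m, hm⟩ | ⟨m, hm⟩
  · left
    have : e ^ k = (1 : G) := by rw [hm, ← two_mul, zpow_mul, h2, one_zpow]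
    rw [← hk]; exact this
  · right
    have : e ^ k = e := by rw [hm, zpow_add, zpow_mul, h2, one_zpow, one_mul, zpow_one]
    rw [← hk]; exact this

/-- If `g,h` are noncentral and commute, then `g*h` is central. -/
lemma commute_central {G : Type*} [Group G]
    (iso : (G ⧸ Subgroup.center G) ≃* K4')
    (g h : G) (hg : g ∉ Subgroup.center G) (hh : h ∉ Subgroup.center G)
    (hc : g * h = h * g) : g * h ∈ Subgroup.center G := by
  set C := Subgroup.center G
  have hu1 : iso (g : G ⧸ C) ≠ 1 := by
    intro h1
    exact hg ((QuotientGroup.eq_one_iff g).mp (iso.injective (by simpa using h1)))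
  have hv1 : iso (h : G ⧸ C) ≠ 1 := by
    intro h1
    exact hh ((QuotientGroup.eq_one_iff h).mp (iso.injective (by simpa using h1)))
  by_cases hmk : (g : G ⧸ C) = (h : G ⧸ C)
  · -- then (g*h : quotient) = h̄² = 1
    have : ((g * h : G) : G ⧸ C) = 1 := by
      apply iso.injective
      rw [QuotientGroup.mk_mul, hmk, map_one, map_mul]
      exact k4'_sq _
    exact (QuotientGroup.eq_one_iff (g * h)).mp this
  · exfalso
    apply hg
    rw [Subgroup.mem_center_iff]
    intro x
    have huv : iso (g : G ⧸ C) ≠ iso (h : G ⧸ C) := fun h1 => hmk (iso.injective h1)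
    rcases k4'_cases (iso (g : G ⧸ C)) (iso (h : G ⧸ C)) (iso (x : G ⧸ C))
      ⟨hu1, hv1, huv⟩ with h0 | h0 | h0 | h0
    · -- x central
      have hx : x ∈ C := (QuotientGroup.eq_one_iff x).mp (iso.injective (by simpa using h0))
      exact (Subgroup.mem_center_iff.mp hx g).symm
    · -- x = g * c
      have hq : (x : G ⧸ C) = (g : G ⧸ C) := iso.injective h0
      have hmem : x⁻¹ * g ∈ C := (QuotientGroup.eq (s := C)).mp hq
      have hcx : ∀ y : G, y * (x⁻¹ * g) = (x⁻¹ * g) * y := Subgroup.mem_center_iff.mp hmem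
      have hxg : g = x * (x⁻¹ * g) := by group
      calc x * g = x * (x * (x⁻¹ * g)) := by rw [← hxg]
        _ = x * ((x⁻¹ * g) * x) := by rw [hcx x]
        _ = (x * (x⁻¹ * g)) * x := by group
        _ = g * x := by rw [← hxg]
    · -- x = h * c
      have hq : (x : G ⧸ C) = (h : G ⧸ C) := iso.injective h0
      have hmem : x⁻¹ * h ∈ C := (QuotientGroup.eq (s := C)).mp hq
      have hcx : ∀ y : G, y * (x⁻¹ * h) = (x⁻¹ * h) * y := Subgroup.mem_center_iff.mp hmem
      set c := x⁻¹ * h with hcdef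
      have hxh : x = h * c⁻¹ := by rw [hcdef]; group
      have hcinv : ∀ y : G, y * c⁻¹ = c⁻¹ * y := by
        intro y
        have := hcx y⁻¹
        calc y * c⁻¹ = (c * y⁻¹)⁻¹ := by group
          _ = (y⁻¹ * c)⁻¹ := by rw [← this]
          _ = c⁻¹ * y := by group
      calc x * g = h * c⁻¹ * g := by rw [hxh]
        _ = h * (c⁻¹ * g) := by group
        _ = h * (g * c⁻¹) := by rw [hcinv g]
        _ = (h * g) * c⁻¹ := by group
        _ = (g * h) * c⁻¹ := by rw [hc]
        _ = g * (h * c⁻¹) := by group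
        _ = g * x := by rw [← hxh]
    · -- x = g * h * c
      have hq : (x : G ⧸ C) = ((g * h : G) : G ⧸ C) := by
        apply iso.injective
        rw [QuotientGroup.mk_mul, map_mul]
        exact h0
      have hmem : x⁻¹ * (g * h) ∈ C := (QuotientGroup.eq (s := C)).mp hq
      have hcx : ∀ y : G, y * (x⁻¹ * (g * h)) = (x⁻¹ * (g * h)) * y :=
        Subgroup.mem_center_iff.mp hmem
      set c := x⁻¹ * (g * h) with hcdef
      have hxh : x = (g * h) * c⁻¹ := by rw [hcdef]; group
      have hcinv : ∀ y : G, y * c⁻¹ = c⁻¹ * y := by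
        intro y
        have := hcx y⁻¹
        calc y * c⁻¹ = (c * y⁻¹)⁻¹ := by group
          _ = (y⁻¹ * c)⁻¹ := by rw [← this]
          _ = c⁻¹ * y := by group
      calc x * g = (g * h) * c⁻¹ * g := by rw [hxh]
        _ = (g * h) * (c⁻¹ * g) := by group
        _ = (g * h) * (g * c⁻¹) := by rw [hcinv g]
        _ = g * (h * g) * c⁻¹ := by group
        _ = g * (g * h) * c⁻¹ := by rw [← hc]
        _ = g * ((g * h) * c⁻¹) := by group
        _ = g * x := by rw [← hxh]


/-- Let `G` be a finite 2-group with center `C` such that `G/C ≅ C₂ × C₂` and the commutator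
subgroup `G' = ⟨e⟩` has order two. Then `g ↦ g` for `g ∈ C`, `g ↦ ge` for `g ∉ C` is an
anti-automorphism of `G` of order two. -/
theorem stmt_12 {G : Type*} [Group G] [Fintype G] (hG : IsPGroup 2 G)
    (e : G) (hcomm : commutator G = Subgroup.zpowers e) (he : orderOf e = 2)
    (hquot : Nonempty ((G ⧸ Subgroup.center G) ≃*
      (Multiplicative (ZMod 2) × Multiplicative (ZMod 2)))) :
    (∀ g h : G, sigmaMap G e (g * h) = sigmaMap G e h * sigmaMap G e g) ∧
    (∀ g : G, sigmaMap G e (sigmaMap G e g) = g) ∧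
    (∃ g : G, sigmaMap G e g ≠ g) := by
  obtain ⟨iso⟩ := hquot
  have he2 : e * e = 1 := by
    have := pow_orderOf_eq_one e
    rwa [he, pow_two] at this
  have hne1 : e ≠ 1 := by
    intro h1
    rw [h1, orderOf_one] at he
    exact absurd he (by decide)
  -- e is central
  have hec : e ∈ Subgroup.center G := by
    have hle : commutator G ≤ Subgroup.center G := by
      have hker := Abelianization.commutator_subset_ker
        (iso.toMonoidHom.comp (QuotientGroup.mk' (Subgroup.center G)))
      intro x hx
      have hx2 : iso ((x : G ⧸ Subgroup.center G)) = 1 := hker hx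
      exact (QuotientGroup.eq_one_iff x).mp (iso.injective (by simpa using hx2))
    exact hle (hcomm ▸ Subgroup.mem_zpowers e)
  have hecomm : ∀ y : G, y * e = e * y := Subgroup.mem_center_iff.mp hec
  refine ⟨?_, ?_, ?_⟩
  · intro g h
    by_cases hg : g ∈ Subgroup.center G <;> by_cases hh : h ∈ Subgroup.center G
    · have hgh : g * h ∈ Subgroup.center G := mul_mem hg hh
      simp only [sigmaMap, if_pos hg, if_pos hh, if_pos hgh]
      exact (Subgroup.mem_center_iff.mp hg h).symm
    · have hgh : g * h ∉ Subgroup.center G := fun hm =>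
        hh (by rw [show h = g⁻¹ * (g * h) by group]; exact mul_mem (inv_mem hg) hm)
      simp only [sigmaMap, if_pos hg, if_neg hh, if_neg hgh]
      have hgc := Subgroup.mem_center_iff.mp hg
      calc g * h * e = (h * g) * e := by rw [hgc h]
        _ = h * (g * e) := by group
        _ = h * (e * g) := by rw [hecomm g]
        _ = h * e * g := by group
    · have hgh : g * h ∉ Subgroup.center G := fun hm =>
        hg (by rw [show g = (g * h) * h⁻¹ by group]; exact mul_mem hm (inv_mem hh))
      simp only [sigmaMap, if_neg hg, if_pos hh, if_neg hgh]
      have hhc := Subgroup.mem_center_iff.mp hh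
      calc g * h * e = (h * g) * e := by rw [← hhc g]
        _ = h * (g * e) := by group
    · by_cases hgh : g * h ∈ Subgroup.center G
      · simp only [sigmaMap, if_neg hg, if_neg hh, if_pos hgh]
        have hghc := Subgroup.mem_center_iff.mp hgh
        have hcm : h * g = g * h := by
          calc h * g = g⁻¹ * ((g * h) * g) := by group
            _ = g⁻¹ * (g * (g * h)) := by rw [hghc g]
            _ = g * h := by group
        calc g * h = h * g := hcm.symm
          _ = (h * g) * 1 := by rw [mul_one]
          _ = (h * g) * (e * e) := by rw [he2]
          _ = (h * (g * e)) * e := by group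
          _ = (h * (e * g)) * e := by rw [hecomm g]
          _ = h * e * (g * e) := by group
      · simp only [sigmaMap, if_neg hg, if_neg hh, if_neg hgh]
        open scoped commutatorElement in
        have hmem : ⁅h, g⁆ ∈ Subgroup.zpowers e := by
          rw [← hcomm, commutator_def]
          exact Subgroup.commutator_mem_commutator (Subgroup.mem_top h) (Subgroup.mem_top g)
        rcases zp_mem e _ he2 hmem with h1 | h1
        · exfalso
          have : h * g = g * h := commutatorElement_eq_one_iff_mul_comm.mp h1
          exact hgh (commute_central iso g h hg hh this.symm)
        · rw [commutatorElement_def] at h1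
          have hhg : h * g = e * (g * h) := by
            calc h * g = (h * g * h⁻¹ * g⁻¹) * (g * h) := by group
              _ = e * (g * h) := by rw [h1]
          calc g * h * e = e * (g * h) := hecomm (g * h)
            _ = h * g := hhg.symm
            _ = (h * g) * (e * e) := by rw [he2, mul_one]
            _ = (h * (g * e)) * e := by group
            _ = (h * (e * g)) * e := by rw [hecomm g]
            _ = h * e * (g * e) := by group
  · intro g
    by_cases hg : g ∈ Subgroup.center G
    · have h1 : sigmaMap G e g = g := by simp only [sigmaMap, if_pos hg]
      rw [h1, h1]
    · have hge : g * e ∉ Subgroup.center G := fun hm =>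
        hg (by rw [show g = (g * e) * e⁻¹ by group]; exact mul_mem hm (inv_mem hec))
      have h1 : sigmaMap G e g = g * e := by simp only [sigmaMap, if_neg hg]
      have h2 : sigmaMap G e (g * e) = g * e * e := by simp only [sigmaMap, if_neg hge]
      rw [h1, h2, mul_assoc, he2, mul_one]
  · obtain ⟨g, hgq⟩ := QuotientGroup.mk_surjective
      (iso.symm (Multiplicative.ofAdd (1 : ZMod 2), 1))
    have hgnc : g ∉ Subgroup.center G := by
      intro hm
      have h1 : iso ((g : G ⧸ Subgroup.center G)) =
          (Multiplicative.ofAdd (1 : ZMod 2), 1) := by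
        rw [hgq]; exact iso.apply_symm_apply _
      rw [(QuotientGroup.eq_one_iff g).mpr hm, map_one] at h1
      exact absurd h1 (by decide)
    refine ⟨g, ?_⟩
    simp only [sigmaMap, if_neg hgnc]
    exact fun hq => hne1 (mul_eq_left.mp hq)
end

section
/- Let G be a finite 2-group with center C such that G/C = ⟨aC⟩ × ⟨bC⟩ is a direct product of two groups of order two and the commutator subgroup G' = ⟨e⟩ has order two. Then every element of the form y = 1 + y₁a + y₂b + y₃ab with y₁, y₂, y₃ ∈ (1 + e)ℤ₂C is a central unit of ℤ₂G satisfying y² = 1; consequently W = {1 + y₁a + y₂b + y₃ab : yᵢ ∈ (1 + e)ℤ₂C} is a central elementary abelian 2-subgroup of V_⊙(ℤ₂G). -/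
section Helpers
variable {G : Type*} [Group G]

variable {G : Type*} [Group G]

lemma emb_mul (g h : G) : (emb g : R2 G) * emb h = emb (g * h) := by
  simp [emb, MonoidAlgebra.single_mul_single]

lemma emb_one : (emb (1 : G) : R2 G) = 1 := rfl

lemma r2_add_self (x : R2 G) : x + x = 0 := by
  have h := two_smul (ZMod 2) x
  have : ((2 : ZMod 2)) = 0 := by decide
  rw [this, zero_smul] at h
  exact h.symm

lemma central_commute {c : G} (hc : c ∈ Subgroup.center G) (x : R2 G) :
    emb c * x = x * emb c :=
  (MonoidAlgebra.single_commute (fun a' => (Subgroup.mem_center_iff.mp hc a').symm)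
    (fun b' => Commute.all 1 b') x)

lemma supp_central_commute {x : R2 G}
    (hx : ↑x.coeff.support ⊆ (Subgroup.center G : Set G)) (y : R2 G) : x * y = y * x := by
  conv_lhs => rw [← MonoidAlgebra.sum_coeff_single x]
  conv_rhs => rw [← MonoidAlgebra.sum_coeff_single x]
  rw [Finsupp.sum_mul, Finsupp.mul_sum]
  refine Finsupp.sum_congr fun g hg => ?_
  exact MonoidAlgebra.single_commute
    (fun a' => (Subgroup.mem_center_iff.mp (hx hg) a').symm)
    (fun b' => Commute.all _ b') y

lemma comm_of_emb_comm {z : R2 G} (hz : ∀ h : G, z * emb h = emb h * z) (x : R2 G) :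
    z * x = x * z := by
  conv_lhs => rw [← MonoidAlgebra.sum_coeff_single x]
  conv_rhs => rw [← MonoidAlgebra.sum_coeff_single x]
  rw [Finsupp.sum_mul, Finsupp.mul_sum]
  refine Finsupp.sum_congr fun g hg => ?_
  have h1 : MonoidAlgebra.single g (x.coeff g) = (x.coeff g) • emb g := by
    rw [emb, MonoidAlgebra.smul_single', mul_one]
  rw [h1, mul_smul_comm, smul_mul_assoc, hz]

lemma zpowers_two {e : G} (he : orderOf e = 2) {x : G} (hx : x ∈ Subgroup.zpowers e) :
    x = 1 ∨ x = e := by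
  obtain ⟨n, rfl⟩ := hx
  show e ^ n = 1 ∨ e ^ n = e
  have he2 : e ^ (2 : ℤ) = 1 := by
    have := pow_orderOf_eq_one e
    rw [he] at this
    exact_mod_cast this
  have key : e ^ n = e ^ (n % 2) := by
    conv_lhs => rw [← Int.emod_add_mul_ediv n 2, zpow_add, zpow_mul, he2, one_zpow, mul_one]
  rw [key]
  have h0 : 0 ≤ n % 2 := Int.emod_nonneg n (by norm_num)
  have h2 : n % 2 < 2 := Int.emod_lt_of_pos n (by norm_num)
  interval_cases h : (n % 2)
  · left; simp
  · right; simp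

open scoped commutatorElement

lemma e_central {e : G} (hcomm : commutator G = Subgroup.zpowers e) (he : orderOf e = 2) :
    e ∈ Subgroup.center G := by
  have he1 : e ≠ 1 := by
    intro h; rw [h, orderOf_one] at he; norm_num at he
  rw [Subgroup.mem_center_iff]
  intro g
  have hmem : ⁅g, e⁆ ∈ Subgroup.zpowers e := by
    rw [← hcomm, commutator_def]
    exact Subgroup.commutator_mem_commutator (Subgroup.mem_top g) (Subgroup.mem_top e)
  rcases zpowers_two he hmem with h | h
  · exact (commutatorElement_eq_one_iff_commute.mp h).eq
  · exfalso
    have h' : g * e * g⁻¹ * e⁻¹ = e := h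
    have h2 : g * e * g⁻¹ = e * e := by
      have := congrArg (fun x => x * e) h'
      simpa [mul_assoc] using this
    have he2 : e * e = 1 := by
      have := pow_orderOf_eq_one e
      rw [he, pow_two] at this; exact this
    rw [he2] at h2
    have : e = 1 := by
      have := congrArg (fun x => g⁻¹ * x * g) h2
      simpa [mul_assoc] using this
    exact he1 this

lemma comm_cases {e : G} (hcomm : commutator G = Subgroup.zpowers e) (he : orderOf e = 2)
    (g h : G) : g * h = h * g ∨ g * h = h * g * e := by
  have hmem : ⁅g, h⁆ ∈ Subgroup.zpowers e := by
    rw [← hcomm, commutator_def]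
    exact Subgroup.commutator_mem_commutator (Subgroup.mem_top g) (Subgroup.mem_top h)
  rcases zpowers_two he hmem with hc | hc
  · left
    exact (commutatorElement_eq_one_iff_commute.mp hc).eq
  · right
    have hec := Subgroup.mem_center_iff.mp (e_central hcomm he)
    calc g * h = ⁅g, h⁆ * (h * g) := by rw [commutatorElement_def]; group
      _ = e * (h * g) := by rw [hc]
      _ = h * g * e := (hec (h * g)).symm

lemma idc_comm {e : G} (hec : e ∈ Subgroup.center G) {x : R2 G} (hx : InIdC e x)
    (y : R2 G) : x * y = y * x := by
  obtain ⟨u, hu, rfl⟩ := hx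
  have h1 : ((1 : R2 G) + emb e) * y = y * (1 + emb e) := by
    rw [add_mul, mul_add, one_mul, mul_one, central_commute hec]
  rw [mul_assoc, supp_central_commute hu y, ← mul_assoc, h1, mul_assoc]

lemma emb_e_sq {e : G} (he2 : e * e = 1) : (emb e : R2 G) * emb e = 1 := by
  rw [emb_mul, he2, emb_one]

lemma one_add_e_sq {e : G} (he2 : e * e = 1) :
    ((1 : R2 G) + emb e) * (1 + emb e) = 0 := by
  rw [mul_add, add_mul, add_mul, one_mul, one_mul, mul_one, emb_e_sq he2,
    add_comm (emb e) (1 : R2 G)]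
  exact r2_add_self _

lemma idc_mul_e {e : G} (hec : e ∈ Subgroup.center G) (he2 : e * e = 1)
    {x : R2 G} (hx : InIdC e x) : x * emb e = x := by
  obtain ⟨u, hu, rfl⟩ := hx
  rw [mul_assoc, supp_central_commute hu (emb e), ← mul_assoc,
    add_mul, one_mul, emb_e_sq he2, add_comm]

lemma idc_mul_idc {e : G} (he2 : e * e = 1)
    {x x' : R2 G} (hx : InIdC e x) (hx' : InIdC e x') : x * x' = 0 := by
  obtain ⟨u, hu, rfl⟩ := hx
  obtain ⟨v, hv, rfl⟩ := hx'
  rw [mul_assoc, ← mul_assoc u, supp_central_commute hu (1 + emb e),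
    mul_assoc (1 + emb e) u v, ← mul_assoc, one_add_e_sq he2, zero_mul]

lemma idc_zero {e : G} : InIdC e (0 : R2 G) :=
  ⟨0, by simp, by rw [mul_zero]⟩

lemma idc_add {e : G} {x y : R2 G} (hx : InIdC e x) (hy : InIdC e y) :
    InIdC e (x + y) := by
  obtain ⟨u, hu, rfl⟩ := hx
  obtain ⟨v, hv, rfl⟩ := hy
  classical
  refine ⟨u + v, ?_, by rw [mul_add]⟩
  intro g hg
  rw [MonoidAlgebra.coeff_add] at hg
  rcases Finset.mem_union.mp (Finsupp.support_add hg) with h | h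
  · exact hu h
  · exact hv h

lemma slide {e : G} (hcomm : commutator G = Subgroup.zpowers e) (he : orderOf e = 2)
    (hec : e ∈ Subgroup.center G) (he2 : e * e = 1)
    {x : R2 G} (hx : InIdC e x) (g h : G) :
    x * emb g * emb h = emb h * (x * emb g) := by
  rcases comm_cases hcomm he g h with hgh | hgh
  · rw [mul_assoc, emb_mul, hgh, ← emb_mul, ← mul_assoc, idc_comm hec hx (emb h),
      mul_assoc]
  · rw [mul_assoc, emb_mul, hgh,
      show (emb (h * g * e) : R2 G) = emb (h * g) * emb e from (emb_mul _ _).symm,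
      show (emb (h * g) : R2 G) * emb e = emb e * emb (h * g) from
        (central_commute hec _).symm,
      ← mul_assoc, idc_mul_e hec he2 hx, ← emb_mul, ← mul_assoc,
      idc_comm hec hx (emb h), mul_assoc]

lemma prod0 {e : G} (hec : e ∈ Subgroup.center G) (he2 : e * e = 1)
    {x x' : R2 G} (hx : InIdC e x) (hx' : InIdC e x') (g g' : G) :
    x * emb g * (x' * emb g') = 0 := by
  rw [mul_assoc x (emb g), ← mul_assoc (emb g) x' (emb g'),
    ← idc_comm hec hx' (emb g), mul_assoc x', ← mul_assoc x x',
    idc_mul_idc he2 hx hx', zero_mul]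

lemma aug_eq_lift (x : R2 G) :
    aug x = (MonoidAlgebra.lift (ZMod 2) (ZMod 2) G 1) x := by
  rw [MonoidAlgebra.lift_apply]
  refine Finsupp.sum_congr fun g _ => ?_
  simp

lemma aug_add (x y : R2 G) : aug (x + y) = aug x + aug y := by
  rw [aug_eq_lift, aug_eq_lift, aug_eq_lift, map_add]

lemma aug_mul (x y : R2 G) : aug (x * y) = aug x * aug y := by
  rw [aug_eq_lift, aug_eq_lift, aug_eq_lift, map_mul]

lemma aug_one : aug (1 : R2 G) = 1 := by rw [aug_eq_lift, map_one]

lemma aug_emb (g : G) : aug (emb g : R2 G) = 1 := by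
  rw [emb, aug, MonoidAlgebra.coeff_single]
  exact Finsupp.sum_single_index rfl

lemma aug_idc {e : G} {x : R2 G} (hx : InIdC e x) : aug x = 0 := by
  obtain ⟨u, hu, rfl⟩ := hx
  rw [aug_mul, aug_add, aug_one, aug_emb]
  have h11 : (1 : ZMod 2) + 1 = 0 := by decide
  rw [h11, zero_mul]

lemma odot_one {e : G} : odot e (1 : R2 G) = 1 := by
  rw [odot, MonoidAlgebra.one_def]
  rw [MonoidAlgebra.coeff_single, Finsupp.mapDomain_single, sigmaMap, if_pos (Subgroup.one_mem _),
    MonoidAlgebra.ofCoeff_single]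

lemma odot_add {e : G} (x y : R2 G) : odot e (x + y) = odot e x + odot e y :=
  by rw [odot, odot, odot, MonoidAlgebra.coeff_add, Finsupp.mapDomain_add, MonoidAlgebra.ofCoeff_add]

lemma odot_supp_mul {e : G} {x : R2 G}
    (hx : ↑x.coeff.support ⊆ (Subgroup.center G : Set G)) {g : G}
    (hg : g ∉ Subgroup.center G) :
    odot e (x * emb g) = x * emb g * emb e := by
  have hform : x * emb g = x.coeff.sum fun z c => MonoidAlgebra.single (z * g) c := by
    conv_lhs => rw [← MonoidAlgebra.sum_coeff_single x]
    rw [Finsupp.sum_mul]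
    refine Finsupp.sum_congr fun z hz => ?_
    rw [emb]
    exact (MonoidAlgebra.single_mul_single _ _ _ _).trans (by rw [mul_one])
  rw [hform]
  change MonoidAlgebra.mapDomain (sigmaMap G e) _ = _
  rw [MonoidAlgebra.mapDomain_sum, Finsupp.sum_mul]
  refine Finsupp.sum_congr fun z hz => ?_
  rw [MonoidAlgebra.mapDomain_single]
  have hzg : z * g ∉ Subgroup.center G := by
    intro hmem
    apply hg
    have h2 : (z : G)⁻¹ * (z * g) ∈ Subgroup.center G :=
      Subgroup.mul_mem _ (Subgroup.inv_mem _ (hx hz)) hmem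
    simpa [← mul_assoc] using h2
  rw [sigmaMap, if_neg hzg, emb, MonoidAlgebra.single_mul_single, mul_one]

lemma idc_supp {e : G} (hec : e ∈ Subgroup.center G) {x : R2 G} (hx : InIdC e x) :
    ↑x.coeff.support ⊆ (Subgroup.center G : Set G) := by
  classical
  obtain ⟨u, hu, rfl⟩ := hx
  rw [add_mul, one_mul]
  intro z hz
  rw [MonoidAlgebra.coeff_add] at hz
  rcases Finset.mem_union.mp (Finsupp.support_add hz) with h | h
  · exact hu h
  · have h2 := MonoidAlgebra.support_coeff_mul_subset (emb e : R2 G) u h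
    rw [Finset.mem_mul] at h2
    obtain ⟨p, hp, q, hq, rfl⟩ := h2
    have hpe : p = e := by
      have := Finsupp.support_single_subset (a := e) (b := (1 : ZMod 2)) hp
      simpa [emb] using this
    subst hpe
    exact Subgroup.mul_mem _ hec (hu hq)

lemma SS0 {e : G} (hec : e ∈ Subgroup.center G) (he2 : e * e = 1)
    {y₁ y₂ y₃ z₁ z₂ z₃ : R2 G}
    (hy1 : InIdC e y₁) (hy2 : InIdC e y₂) (hy3 : InIdC e y₃)
    (hz1 : InIdC e z₁) (hz2 : InIdC e z₂) (hz3 : InIdC e z₃) (a b : G) :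
    (y₁ * emb a + y₂ * emb b + y₃ * emb (a * b)) *
      (z₁ * emb a + z₂ * emb b + z₃ * emb (a * b)) = 0 := by
  simp only [add_mul, mul_add,
    prod0 hec he2 hy1 hz1 a a, prod0 hec he2 hy1 hz2 a b, prod0 hec he2 hy1 hz3 a (a*b),
    prod0 hec he2 hy2 hz1 b a, prod0 hec he2 hy2 hz2 b b, prod0 hec he2 hy2 hz3 b (a*b),
    prod0 hec he2 hy3 hz1 (a*b) a, prod0 hec he2 hy3 hz2 (a*b) b,
    prod0 hec he2 hy3 hz3 (a*b) (a*b), add_zero]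

lemma mulYZ {e : G} (hcomm : commutator G = Subgroup.zpowers e) (he : orderOf e = 2)
    (a b : G) {y₁ y₂ y₃ z₁ z₂ z₃ : R2 G}
    (hy1 : InIdC e y₁) (hy2 : InIdC e y₂) (hy3 : InIdC e y₃)
    (hz1 : InIdC e z₁) (hz2 : InIdC e z₂) (hz3 : InIdC e z₃) :
    (1 + y₁ * emb a + y₂ * emb b + y₃ * (emb a * emb b)) *
      (1 + z₁ * emb a + z₂ * emb b + z₃ * (emb a * emb b)) =
    1 + (y₁ + z₁) * emb a + (y₂ + z₂) * emb b + (y₃ + z₃) * (emb a * emb b) := by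
  have hec := e_central hcomm he
  have he2 : e * e = 1 := by
    have := pow_orderOf_eq_one e; rwa [he, pow_two] at this
  rw [emb_mul a b]
  rw [show ((1:R2 G) + y₁ * emb a + y₂ * emb b + y₃ * emb (a*b)) =
      1 + (y₁ * emb a + y₂ * emb b + y₃ * emb (a*b)) from by abel,
    show ((1:R2 G) + z₁ * emb a + z₂ * emb b + z₃ * emb (a*b)) =
      1 + (z₁ * emb a + z₂ * emb b + z₃ * emb (a*b)) from by abel]
  rw [mul_add, mul_one, add_mul, one_mul,
    SS0 hec he2 hy1 hy2 hy3 hz1 hz2 hz3 a b, add_zero]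
  rw [add_mul, add_mul, add_mul]
  abel

lemma sqone {e : G} (hcomm : commutator G = Subgroup.zpowers e) (he : orderOf e = 2)
    (a b : G) {y₁ y₂ y₃ : R2 G}
    (hy1 : InIdC e y₁) (hy2 : InIdC e y₂) (hy3 : InIdC e y₃) :
    (1 + y₁ * emb a + y₂ * emb b + y₃ * (emb a * emb b)) *
      (1 + y₁ * emb a + y₂ * emb b + y₃ * (emb a * emb b)) = 1 := by
  rw [mulYZ hcomm he a b hy1 hy2 hy3 hy1 hy2 hy3,
    r2_add_self y₁, r2_add_self y₂, r2_add_self y₃, zero_mul, zero_mul, zero_mul,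
    add_zero, add_zero, add_zero]

lemma Ycomm {e : G} (hcomm : commutator G = Subgroup.zpowers e) (he : orderOf e = 2)
    (a b : G) {y₁ y₂ y₃ : R2 G}
    (hy1 : InIdC e y₁) (hy2 : InIdC e y₂) (hy3 : InIdC e y₃) (x : R2 G) :
    (1 + y₁ * emb a + y₂ * emb b + y₃ * (emb a * emb b)) * x =
      x * (1 + y₁ * emb a + y₂ * emb b + y₃ * (emb a * emb b)) := by
  have hec := e_central hcomm he
  have he2 : e * e = 1 := by
    have := pow_orderOf_eq_one e; rwa [he, pow_two] at this
  refine comm_of_emb_comm (fun h => ?_) x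
  rw [emb_mul a b]
  rw [add_mul, add_mul, add_mul, one_mul, mul_add, mul_add, mul_add, mul_one]
  rw [slide hcomm he hec he2 hy1 a h, slide hcomm he hec he2 hy2 b h,
    slide hcomm he hec he2 hy3 (a*b) h]

lemma mul_emb_e {e : G} (hec : e ∈ Subgroup.center G) (he2 : e * e = 1)
    {x : R2 G} (hx : InIdC e x) (g : G) : x * emb g * emb e = x * emb g := by
  rw [mul_assoc, ← central_commute hec (emb g), ← mul_assoc, idc_mul_e hec he2 hx]

lemma odotY {e : G} (hec : e ∈ Subgroup.center G) (he2 : e * e = 1)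
    {a b : G} (hga : a ∉ Subgroup.center G) (hgb : b ∉ Subgroup.center G)
    (hgab : a * b ∉ Subgroup.center G) {y₁ y₂ y₃ : R2 G}
    (hy1 : InIdC e y₁) (hy2 : InIdC e y₂) (hy3 : InIdC e y₃) :
    odot e (1 + y₁ * emb a + y₂ * emb b + y₃ * (emb a * emb b)) =
      1 + y₁ * emb a + y₂ * emb b + y₃ * (emb a * emb b) := by
  rw [emb_mul a b]
  rw [odot_add, odot_add, odot_add, odot_one,
    odot_supp_mul (idc_supp hec hy1) hga,
    odot_supp_mul (idc_supp hec hy2) hgb,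
    odot_supp_mul (idc_supp hec hy3) hgab,
    mul_emb_e hec he2 hy1 a, mul_emb_e hec he2 hy2 b, mul_emb_e hec he2 hy3 (a*b)]

end Helpers
/-- Every element `y = 1 + y₁a + y₂b + y₃ab` with `y₁, y₂, y₃ ∈ (1 + e)ℤ₂C` is a central
unit of `ℤ₂G` with `y² = 1`; consequently `W = {1 + y₁a + y₂b + y₃ab : yᵢ ∈ (1 + e)ℤ₂C}` is
a central elementary abelian 2-subgroup of `V_⊙(ℤ₂G)`. -/
theorem stmt_14
 {G : Type*} [Group G] [Fintype G] (hG : IsPGroup 2 G)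
    (e : G) (hcomm : commutator G = Subgroup.zpowers e) (he : orderOf e = 2)
    (a b : G)
    (ha : orderOf ((a : G ⧸ Subgroup.center G)) = 2)
    (hb : orderOf ((b : G ⧸ Subgroup.center G)) = 2)
    (hab : ((a : G ⧸ Subgroup.center G)) * b = (b : G ⧸ Subgroup.center G) * a)
    (hinf : Subgroup.zpowers ((a : G ⧸ Subgroup.center G)) ⊓
      Subgroup.zpowers ((b : G ⧸ Subgroup.center G)) = ⊥)
    (hsup : Subgroup.zpowers ((a : G ⧸ Subgroup.center G)) ⊔
      Subgroup.zpowers ((b : G ⧸ Subgroup.center G)) = ⊤)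
    :
    (∀ y₁ y₂ y₃ : R2 G, InIdC e y₁ → InIdC e y₂ → InIdC e y₃ →
      (∀ x : R2 G,
        (1 + y₁ * emb a + y₂ * emb b + y₃ * (emb a * emb b)) * x =
          x * (1 + y₁ * emb a + y₂ * emb b + y₃ * (emb a * emb b))) ∧
      (1 + y₁ * emb a + y₂ * emb b + y₃ * (emb a * emb b)) *
        (1 + y₁ * emb a + y₂ * emb b + y₃ * (emb a * emb b)) = 1 ∧
      aug (1 + y₁ * emb a + y₂ * emb b + y₃ * (emb a * emb b)) = 1 ∧
      odot e (1 + y₁ * emb a + y₂ * emb b + y₃ * (emb a * emb b)) *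
        (1 + y₁ * emb a + y₂ * emb b + y₃ * (emb a * emb b)) = 1) ∧
    ∃ W : Subgroup (R2 G)ˣ,
      (W : Set (R2 G)ˣ) = WsetB e a b ∧
      (∀ w ∈ W, w ∈ VodotSet G e ∧ w * w = 1 ∧
        ∀ x : R2 G, (w : R2 G) * x = x * (w : R2 G)) := by
  have hec := e_central hcomm he
  have he2 : e * e = 1 := by
    have := pow_orderOf_eq_one e; rwa [he, pow_two] at this
  have haC : a ∉ Subgroup.center G := by
    intro h
    rw [(QuotientGroup.eq_one_iff a).mpr h, orderOf_one] at ha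
    norm_num at ha
  have hbC : b ∉ Subgroup.center G := by
    intro h
    rw [(QuotientGroup.eq_one_iff b).mpr h, orderOf_one] at hb
    norm_num at hb
  have habC : a * b ∉ Subgroup.center G := by
    intro h
    have h1 : ((a * b : G) : G ⧸ Subgroup.center G) = 1 :=
      (QuotientGroup.eq_one_iff _).mpr h
    rw [QuotientGroup.mk_mul] at h1
    have h2 : (a : G ⧸ Subgroup.center G) = (b : G ⧸ Subgroup.center G)⁻¹ :=
      eq_inv_of_mul_eq_one_left h1
    have h4 : (a : G ⧸ Subgroup.center G) ∈
        Subgroup.zpowers (b : G ⧸ Subgroup.center G) := by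
      rw [h2]; exact Subgroup.inv_mem _ (Subgroup.mem_zpowers _)
    have h5 : (a : G ⧸ Subgroup.center G) ∈
        Subgroup.zpowers (a : G ⧸ Subgroup.center G) ⊓
          Subgroup.zpowers (b : G ⧸ Subgroup.center G) :=
      Subgroup.mem_inf.mpr ⟨Subgroup.mem_zpowers _, h4⟩
    rw [hinf, Subgroup.mem_bot] at h5
    rw [h5, orderOf_one] at ha
    norm_num at ha
  have key : ∀ y₁ y₂ y₃ : R2 G, InIdC e y₁ → InIdC e y₂ → InIdC e y₃ →
      (∀ x : R2 G,
        (1 + y₁ * emb a + y₂ * emb b + y₃ * (emb a * emb b)) * x =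
          x * (1 + y₁ * emb a + y₂ * emb b + y₃ * (emb a * emb b))) ∧
      (1 + y₁ * emb a + y₂ * emb b + y₃ * (emb a * emb b)) *
        (1 + y₁ * emb a + y₂ * emb b + y₃ * (emb a * emb b)) = 1 ∧
      aug (1 + y₁ * emb a + y₂ * emb b + y₃ * (emb a * emb b)) = 1 ∧
      odot e (1 + y₁ * emb a + y₂ * emb b + y₃ * (emb a * emb b)) *
        (1 + y₁ * emb a + y₂ * emb b + y₃ * (emb a * emb b)) = 1 := by
    intro y₁ y₂ y₃ hy1 hy2 hy3
    refine ⟨Ycomm hcomm he a b hy1 hy2 hy3, sqone hcomm he a b hy1 hy2 hy3, ?_, ?_⟩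
    · rw [aug_add, aug_add, aug_add, aug_one, aug_mul, aug_mul, aug_mul,
        aug_idc hy1, aug_idc hy2, aug_idc hy3, zero_mul, zero_mul, zero_mul,
        add_zero, add_zero, add_zero]
    · rw [odotY hec he2 haC hbC habC hy1 hy2 hy3]
      exact sqone hcomm he a b hy1 hy2 hy3
  refine ⟨key, ?_⟩
  refine ⟨{ carrier := WsetB e a b
            one_mem' := ⟨0, 0, 0, idc_zero, idc_zero, idc_zero, by simp⟩
            mul_mem' := ?_
            inv_mem' := ?_ }, rfl, ?_⟩
  · rintro w₁ w₂ ⟨y₁, y₂, y₃, hy1, hy2, hy3, hw1⟩ ⟨z₁, z₂, z₃, hz1, hz2, hz3, hw2⟩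
    exact ⟨y₁ + z₁, y₂ + z₂, y₃ + z₃, idc_add hy1 hz1, idc_add hy2 hz2,
      idc_add hy3 hz3, by
        rw [Units.val_mul, hw1, hw2, mulYZ hcomm he a b hy1 hy2 hy3 hz1 hz2 hz3]⟩
  · rintro w hw
    obtain ⟨y₁, y₂, y₃, hy1, hy2, hy3, hw1⟩ := hw
    have hsq : w * w = 1 := Units.ext (by
      rw [Units.val_mul, hw1, sqone hcomm he a b hy1 hy2 hy3, Units.val_one])
    show w⁻¹ ∈ WsetB e a b
    rw [inv_eq_of_mul_eq_one_right hsq]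
    exact ⟨y₁, y₂, y₃, hy1, hy2, hy3, hw1⟩
  · rintro w hw
    obtain ⟨y₁, y₂, y₃, hy1, hy2, hy3, hw1⟩ := hw
    have hsq : w * w = 1 := Units.ext (by
      rw [Units.val_mul, hw1, sqone hcomm he a b hy1 hy2 hy3, Units.val_one])
    refine ⟨⟨?_, ?_⟩, hsq, fun x => ?_⟩
    · rw [hw1]
      exact (key y₁ y₂ y₃ hy1 hy2 hy3).2.2.1
    · rw [inv_eq_of_mul_eq_one_right hsq, hw1,
        odotY hec he2 haC hbC habC hy1 hy2 hy3]
    · rw [hw1]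
      exact (key y₁ y₂ y₃ hy1 hy2 hy3).1 x
end
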